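/- arXiv:2410.07465 — 2 statements merged into one kernel-verified Lean document; each statement's English description precedes it below -/
import Mathlib

section
/- Stability of the implicit midpoint low-rank GMRES scheme: Let F(X,t) = L(X) satisfy the dissipativity condition ⟨F(Z,t), Z⟩ ≤ α‖Z‖² for all matrices Z and all t (this is the one-sided Lipschitz condition ⟨F(X,t)−F(Y,t), X−Y⟩ ≤ α‖X−Y‖² together with F(0,t)=0). Fix constants α ∈ ℝ, c > 0 and a final time T > 0. Then there exist Δt₀ > 0 and C > 0, depending only on α, c and T, such that the following holds: for every 0 < Δt ≤ Δt₀, every N ∈ ℕ with N·Δt ≤ T, and all sequences of matrices (Xⁿ)ₙ and (X̃ⁿ⁺¹)ₙ satisfying for every n < N (i) the truncation bound ‖Xⁿ⁺¹‖ ≤ ‖X̃ⁿ⁺¹‖, and (ii) the residual bound ‖X̃ⁿ⁺¹ − Xⁿ − Δt·F((Xⁿ + X̃ⁿ⁺¹)/2, tⁿ⁺¹ᐟ²)‖ ≤ c·Δt²·(‖X̃ⁿ⁺¹‖ + ‖Xⁿ‖), one has ‖Xⁿ‖ ≤ C‖X⁰‖ for all n ≤ N. -/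
/-- Frobenius inner product on real `m₁ × m₂` matrices. -/
def finner {m₁ m₂ : ℕ} (A B : Matrix (Fin m₁) (Fin m₂) ℝ) : ℝ :=
  ∑ i, ∑ j, A i j * B i j

/-- Frobenius norm on real `m₁ × m₂` matrices. -/
noncomputable def fnorm {m₁ m₂ : ℕ} (A : Matrix (Fin m₁) (Fin m₂) ℝ) : ℝ :=
  Real.sqrt (∑ i, ∑ j, (A i j) ^ 2)

namespace StabilityAux

/-- View a matrix as a vector in Euclidean space. -/
def toE {m₁ m₂ : ℕ} (A : Matrix (Fin m₁) (Fin m₂) ℝ) :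
    EuclideanSpace ℝ (Fin m₁ × Fin m₂) := WithLp.toLp 2 (fun p => A p.1 p.2)

lemma finner_eq {m₁ m₂ : ℕ} (A B : Matrix (Fin m₁) (Fin m₂) ℝ) :
    finner A B = inner ℝ (toE A) (toE B) := by
  simp [finner, toE, PiLp.inner_apply, RCLike.inner_apply, Fintype.sum_prod_type]
  exact Finset.sum_congr rfl fun i _ => Finset.sum_congr rfl fun j _ => mul_comm _ _

lemma fnorm_eq {m₁ m₂ : ℕ} (A : Matrix (Fin m₁) (Fin m₂) ℝ) :
    fnorm A = ‖toE A‖ := by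
  rw [fnorm, EuclideanSpace.norm_eq, Fintype.sum_prod_type]
  simp [toE, Real.norm_eq_abs, sq_abs]

lemma fnorm_nonneg {m₁ m₂ : ℕ} (A : Matrix (Fin m₁) (Fin m₂) ℝ) : 0 ≤ fnorm A :=
  Real.sqrt_nonneg _

set_option maxHeartbeats 2000000 in
/-- The quadratic energy inequality for one implicit midpoint step. -/
lemma quad_ineq {m₁ m₂ : ℕ} (α c Δt : ℝ)
    (L : Matrix (Fin m₁) (Fin m₂) ℝ →ₗ[ℝ] Matrix (Fin m₁) (Fin m₂) ℝ)
    (hc : 0 ≤ c)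
    (hdiss : ∀ Z : Matrix (Fin m₁) (Fin m₂) ℝ, finner (L Z) Z ≤ α * (fnorm Z) ^ 2)
    (hΔt : 0 < Δt)
    (Xn Xt1 : Matrix (Fin m₁) (Fin m₂) ℝ)
    (hres : fnorm (Xt1 - Xn - Δt • L ((2 : ℝ)⁻¹ • (Xn + Xt1)))
      ≤ c * Δt ^ 2 * (fnorm Xt1 + fnorm Xn)) :
    fnorm Xt1 ^ 2 - fnorm Xn ^ 2
      ≤ (c * Δt ^ 2 + (max α 0) * Δt / 2) * (fnorm Xt1 + fnorm Xn) ^ 2 := by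
  set x := toE Xn with hx
  set y := toE Xt1 with hy
  set W := (2 : ℝ)⁻¹ • (Xn + Xt1) with hW
  set M := toE W with hMdef
  set Lm := toE (L W) with hLm
  set r := y - x - Δt • Lm with hr
  have hM : M = (2 : ℝ)⁻¹ • (x + y) := by
    ext p
    simp [hMdef, hW, hx, hy, toE, Matrix.smul_apply, Matrix.add_apply,
      PiLp.smul_apply, PiLp.add_apply]
  have hrE : toE (Xt1 - Xn - Δt • L W) = r := by
    ext p
    simp [hr, hLm, hx, hy, toE, Matrix.sub_apply, Matrix.smul_apply,
      PiLp.sub_apply, PiLp.smul_apply]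
  have e1 : (inner ℝ (y - x) M : ℝ) = (‖y‖ ^ 2 - ‖x‖ ^ 2) / 2 := by
    rw [hM]
    simp only [real_inner_smul_right, inner_sub_left, inner_add_right,
      real_inner_self_eq_norm_sq]
    rw [real_inner_comm y x]
    ring
  have e2 : y - x = r + Δt • Lm := by rw [hr]; abel
  have e3 : (inner ℝ r M : ℝ) ≤ ‖r‖ * ‖M‖ := real_inner_le_norm r M
  have e4 : (inner ℝ Lm M : ℝ) ≤ α * ‖M‖ ^ 2 := by
    have := hdiss W
    rwa [finner_eq, fnorm_eq] at this
  have e5 : ‖M‖ ≤ (‖x‖ + ‖y‖) / 2 := by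
    rw [hM, norm_smul]
    have := norm_add_le x y
    simp only [norm_inv, Real.norm_ofNat]
    linarith
  have e5' : ‖M‖ ^ 2 ≤ ((‖x‖ + ‖y‖) / 2) ^ 2 := by
    have h0 : (0:ℝ) ≤ ‖M‖ := norm_nonneg M
    nlinarith
  have hrb : ‖r‖ ≤ c * Δt ^ 2 * (‖y‖ + ‖x‖) := by
    rw [fnorm_eq, hrE, fnorm_eq, fnorm_eq] at hres
    linarith
  have e6 : (inner ℝ (y - x) M : ℝ) = inner ℝ r M + Δt * inner ℝ Lm M := by
    rw [e2, inner_add_left, real_inner_smul_left]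
  rw [fnorm_eq, fnorm_eq, ← hx, ← hy]
  have hβα : α ≤ max α 0 := le_max_left α 0
  have hβ0 : (0:ℝ) ≤ max α 0 := le_max_right α 0
  have hM0 : (0:ℝ) ≤ ‖M‖ := norm_nonneg M
  have hx0 : (0:ℝ) ≤ ‖x‖ := norm_nonneg x
  have hy0 : (0:ℝ) ≤ ‖y‖ := norm_nonneg y
  have hr0 : (0:ℝ) ≤ ‖r‖ := norm_nonneg r
  nlinarith [mul_nonneg (sub_nonneg.2 hβα) (sq_nonneg ‖M‖),
    mul_nonneg hβ0 (sub_nonneg.2 e5'),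
    mul_le_mul hrb e5 hM0
      (mul_nonneg (mul_nonneg hc (sq_nonneg Δt)) (by linarith [norm_nonneg x, norm_nonneg y])),
    mul_nonneg hΔt.le (mul_nonneg (sub_nonneg.2 hβα) (sq_nonneg ‖M‖)),
    mul_nonneg hΔt.le (mul_nonneg hβ0 (sub_nonneg.2 e5'))]

/-- The scalar one-step stability estimate. -/
lemma abstract_step (β c Δt a b : ℝ) (hβ : 0 ≤ β) (hc : 0 < c) (ha : 0 ≤ a) (hb : 0 ≤ b)
    (hΔt : 0 < Δt) (hΔt1 : Δt ≤ 1)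
    (hq : c * Δt ^ 2 + β * Δt / 2 ≤ 1 / 4)
    (h : a ^ 2 - b ^ 2 ≤ (c * Δt ^ 2 + β * Δt / 2) * (a + b) ^ 2) :
    a ≤ (1 + (4 * c + 2 * β) * Δt) * b := by
  set q := c * Δt ^ 2 + β * Δt / 2 with hqdef
  have hq0 : 0 ≤ q := by rw [hqdef]; positivity
  clear_value q
  rcases eq_or_lt_of_le (by positivity : (0:ℝ) ≤ a + b) with h0 | h0
  · have ha0 : a = 0 := by linarith
    have hb0 : b = 0 := by linarith
    rw [ha0, hb0]
    nlinarith
  · have h1 : a * (1 - q) ≤ b * (1 + q) := by nlinarith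
    have h1q : (0:ℝ) < 1 - q := by linarith
    have hbq : 0 ≤ b * q * (1 - 2 * q) :=
      mul_nonneg (mul_nonneg hb hq0) (by linarith)
    have h2 : a ≤ (1 + 4 * q) * b := by nlinarith
    have h3 : 4 * q ≤ (4 * c + 2 * β) * Δt := by
      nlinarith [mul_nonneg (mul_nonneg hc.le hΔt.le) (by linarith : (0:ℝ) ≤ 1 - Δt)]
    nlinarith [mul_nonneg hb (by linarith : (0:ℝ) ≤ (4 * c + 2 * β) * Δt - 4 * q)]

end StabilityAux

open StabilityAux

/-- Stability of the implicit midpoint low-rank GMRES scheme. -/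
theorem stability_implicit_midpoint_lrGMRES (α c T : ℝ) (hc : 0 < c) (hT : 0 < T) :
    ∃ Δt₀ > (0 : ℝ), ∃ C > (0 : ℝ),
      ∀ (m₁ m₂ : ℕ)
        (L : Matrix (Fin m₁) (Fin m₂) ℝ →ₗ[ℝ] Matrix (Fin m₁) (Fin m₂) ℝ),
        (∀ Z : Matrix (Fin m₁) (Fin m₂) ℝ, finner (L Z) Z ≤ α * (fnorm Z) ^ 2) →
        ∀ Δt : ℝ, 0 < Δt → Δt ≤ Δt₀ →
        ∀ N : ℕ, (N : ℝ) * Δt ≤ T →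
        ∀ X Xt : ℕ → Matrix (Fin m₁) (Fin m₂) ℝ,
          (∀ n < N, fnorm (X (n + 1)) ≤ fnorm (Xt (n + 1))) →
          (∀ n < N,
            fnorm (Xt (n + 1) - X n - Δt • L ((2 : ℝ)⁻¹ • (X n + Xt (n + 1))))
              ≤ c * Δt ^ 2 * (fnorm (Xt (n + 1)) + fnorm (X n))) →
          ∀ n ≤ N, fnorm (X n) ≤ C * fnorm (X 0) := by
  set β := max α 0 with hβdef
  have hβ0 : (0:ℝ) ≤ β := le_max_right α 0
  set K := 4 * c + 2 * β with hKdef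
  have hK0 : (0:ℝ) ≤ K := by positivity
  refine ⟨min 1 (1 / (4 * c + 2 * β + 1)), by positivity, Real.exp (K * T),
    Real.exp_pos _, ?_⟩
  intro m₁ m₂ L hdiss Δt hΔt hΔt₀ N hNT X Xt htrunc hres n hnN
  have hΔt1 : Δt ≤ 1 := le_trans hΔt₀ (min_le_left _ _)
  have hD : (0:ℝ) < 4 * c + 2 * β + 1 := by positivity
  have hΔt2 : Δt * (4 * c + 2 * β + 1) ≤ 1 := by
    rw [← le_div_iff₀ hD]
    exact le_trans hΔt₀ (min_le_right _ _)
  have hq : c * Δt ^ 2 + β * Δt / 2 ≤ 1 / 4 := by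
    nlinarith [mul_nonneg (mul_nonneg hc.le hΔt.le) (by linarith : (0:ℝ) ≤ 1 - Δt)]
  -- one-step estimate
  have step : ∀ k < N, fnorm (X (k + 1)) ≤ (1 + K * Δt) * fnorm (X k) := by
    intro k hk
    have hquad := quad_ineq α c Δt L hc.le hdiss hΔt (X k) (Xt (k + 1)) (hres k hk)
    have habs := abstract_step β c Δt (fnorm (Xt (k + 1))) (fnorm (X k)) hβ0 hc
      (fnorm_nonneg _) (fnorm_nonneg _) hΔt hΔt1 hq hquad
    calc fnorm (X (k + 1)) ≤ fnorm (Xt (k + 1)) := htrunc k hk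
      _ ≤ (1 + (4 * c + 2 * β) * Δt) * fnorm (X k) := habs
      _ = (1 + K * Δt) * fnorm (X k) := by rw [hKdef]
  have hKΔt : (0:ℝ) ≤ 1 + K * Δt := by positivity
  -- induction
  have main : ∀ k, k ≤ N → fnorm (X k) ≤ (1 + K * Δt) ^ k * fnorm (X 0) := by
    intro k
    induction k with
    | zero => intro _; simp
    | succ j ih =>
      intro hj
      have hjN : j < N := Nat.lt_of_succ_le hj
      have h1 := step j hjN
      have h2 := ih (le_of_lt hjN)
      calc fnorm (X (j + 1)) ≤ (1 + K * Δt) * fnorm (X j) := h1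
        _ ≤ (1 + K * Δt) * ((1 + K * Δt) ^ j * fnorm (X 0)) :=
            mul_le_mul_of_nonneg_left h2 hKΔt
        _ = (1 + K * Δt) ^ (j + 1) * fnorm (X 0) := by ring
  have h1 := main n hnN
  have h2 : (1 + K * Δt) ^ n ≤ Real.exp (K * T) := by
    have ha : (1 + K * Δt) ^ n ≤ Real.exp (K * Δt) ^ n := by
      apply pow_le_pow_left₀ hKΔt
      linarith [Real.add_one_le_exp (K * Δt)]
    have hb : Real.exp (K * Δt) ^ n = Real.exp (K * Δt * n) := by
      rw [← Real.exp_nat_mul]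
      ring_nf
    have hnT : (n : ℝ) * Δt ≤ T := by
      calc (n : ℝ) * Δt ≤ (N : ℝ) * Δt := by
            apply mul_le_mul_of_nonneg_right _ hΔt.le
            exact_mod_cast hnN
        _ ≤ T := hNT
    have hcmp : K * Δt * n ≤ K * T := by
      have : K * ((n : ℝ) * Δt) ≤ K * T := mul_le_mul_of_nonneg_left hnT hK0
      linarith [this]
    calc (1 + K * Δt) ^ n ≤ Real.exp (K * Δt * n) := by rw [← hb]; exact ha
      _ ≤ Real.exp (K * T) := Real.exp_le_exp.2 hcmp
  calc fnorm (X n) ≤ (1 + K * Δt) ^ n * fnorm (X 0) := h1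
    _ ≤ Real.exp (K * T) * fnorm (X 0) :=
        mul_le_mul_of_nonneg_right h2 (fnorm_nonneg _)
end

section
/- Convergence of the implicit midpoint low-rank GMRES scheme: Let L be an ℝ-linear map on real m₁×m₂ matrices with ⟨L(Z), Z⟩ ≤ α‖Z‖² for all Z. Fix constants α ∈ ℝ, c > 0, c₀ > 0 and a final time T > 0. Then there exist Δt₀ > 0 and C > 0, depending only on α, c, c₀ and T, such that for every 0 < Δt ≤ Δt₀, every N with N·Δt ≤ T, and all sequences of matrices (Xⁿ), (X̃ⁿ⁺¹), (Yⁿ), (Gⁿ), (rⁿ) satisfying for all n < N: (i) Yⁿ⁺¹ − Yⁿ = Δt·L((Yⁿ + Yⁿ⁺¹)/2) + Gⁿ with ‖Gⁿ‖ ≤ c·Δt² (exact-solution midpoint identity with local truncation error), (ii) X̃ⁿ⁺¹ − Xⁿ = Δt·L((Xⁿ + X̃ⁿ⁺¹)/2) + rⁿ with ‖rⁿ‖ ≤ c·Δt² (converged GMRES step), (iii) ‖Xⁿ⁺¹ − X̃ⁿ⁺¹‖ ≤ c·Δt² (truncation step), and (iv) the initial error satisfies ‖X⁰ − Y⁰‖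 ≤ c₀·Δt, one has ‖Xⁿ − Yⁿ‖ ≤ C·Δt for all n ≤ N. -/
open scoped RealInnerProductSpace

noncomputable def eqE {m₁ m₂ : ℕ} :
    Matrix (Fin m₁) (Fin m₂) ℝ ≃ₗ[ℝ] EuclideanSpace ℝ (Fin m₁ × Fin m₂) where
  toFun A := WithLp.toLp 2 (fun p => A p.1 p.2)
  invFun x := fun i j => x (i, j)
  map_add' _ _ := rfl
  map_smul' _ _ := rfl
  left_inv _ := rfl
  right_inv _ := rfl

lemma eqE_apply {m₁ m₂ : ℕ} (A : Matrix (Fin m₁) (Fin m₂) ℝ) (p : Fin m₁ × Fin m₂) :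
    eqE A p = A p.1 p.2 := rfl

lemma fnorm_eq {m₁ m₂ : ℕ} (A : Matrix (Fin m₁) (Fin m₂) ℝ) : fnorm A = ‖eqE A‖ := by
  rw [fnorm, EuclideanSpace.norm_eq]
  congr 1
  rw [Fintype.sum_prod_type]
  simp [eqE_apply, Real.norm_eq_abs, sq_abs]

lemma finner_eq {m₁ m₂ : ℕ} (A B : Matrix (Fin m₁) (Fin m₂) ℝ) :
    finner A B = ⟪eqE A, eqE B⟫ := by
  simp [finner, PiLp.inner_apply, RCLike.inner_apply, Fintype.sum_prod_type, eqE_apply,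
    mul_comm]

lemma fnorm_nonneg' {m₁ m₂ : ℕ} (A : Matrix (Fin m₁) (Fin m₂) ℝ) : 0 ≤ fnorm A := by
  rw [fnorm_eq]; exact norm_nonneg _

lemma fnorm_add_le {m₁ m₂ : ℕ} (A B : Matrix (Fin m₁) (Fin m₂) ℝ) :
    fnorm (A + B) ≤ fnorm A + fnorm B := by
  rw [fnorm_eq, fnorm_eq, fnorm_eq, map_add]; exact norm_add_le _ _

lemma fnorm_sub_le {m₁ m₂ : ℕ} (A B : Matrix (Fin m₁) (Fin m₂) ℝ) :
    fnorm (A - B) ≤ fnorm A + fnorm B := by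
  rw [fnorm_eq, fnorm_eq, fnorm_eq, map_sub]; exact norm_sub_le _ _

lemma step_bound {E : Type*} [NormedAddCommGroup E] [InnerProductSpace ℝ E]
    (L : E →ₗ[ℝ] E) (α : ℝ) (hL : ∀ z : E, ⟪L z, z⟫ ≤ α * ‖z‖ ^ 2)
    {Δt : ℝ} (hΔt : 0 < Δt) (hx : Δt * max α 0 ≤ 1 / 2)
    (a b g : E) (hab : b - a = Δt • L ((2:ℝ)⁻¹ • (a + b)) + g) :
    ‖b‖ ≤ (1 + 3 / 2 * (max α 0) * Δt) * ‖a‖ + 2 * ‖g‖ := by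
  have hα : (0:ℝ) ≤ max α 0 := le_max_right _ _
  set m : E := (2:ℝ)⁻¹ • (a + b) with hm
  have hab2 : a + b = (2:ℝ) • m := by rw [hm, smul_smul]; norm_num
  have key : ‖b‖ ^ 2 - ‖a‖ ^ 2 = ⟪b - a, a + b⟫ := by
    rw [inner_sub_left, inner_add_right, inner_add_right,
      real_inner_self_eq_norm_sq, real_inner_self_eq_norm_sq, real_inner_comm a b]
    ring
  have h2 : ⟪b - a, a + b⟫ = 2 * Δt * ⟪L m, m⟫ + ⟪g, a + b⟫ := by
    rw [hab, inner_add_left, real_inner_smul_left, hab2, real_inner_smul_right]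
    ring
  have hLm : ⟪L m, m⟫ ≤ max α 0 * ‖m‖ ^ 2 :=
    le_trans (hL m) (mul_le_mul_of_nonneg_right (le_max_left _ _) (sq_nonneg _))
  have hmn : ‖m‖ ≤ (‖a‖ + ‖b‖) / 2 := by
    rw [hm, norm_smul]
    have h := norm_add_le a b
    have : ‖(2:ℝ)⁻¹‖ = 1/2 := by norm_num
    rw [this]
    linarith
  have hg : ⟪g, a + b⟫ ≤ ‖g‖ * (‖a‖ + ‖b‖) := by
    calc ⟪g, a + b⟫ ≤ ‖g‖ * ‖a + b‖ := real_inner_le_norm _ _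
      _ ≤ ‖g‖ * (‖a‖ + ‖b‖) := by
          exact mul_le_mul_of_nonneg_left (norm_add_le a b) (norm_nonneg g)
  have hA : (0:ℝ) ≤ ‖a‖ := norm_nonneg a
  have hB : (0:ℝ) ≤ ‖b‖ := norm_nonneg b
  have hG : (0:ℝ) ≤ ‖g‖ := norm_nonneg g
  set A := ‖a‖
  set B := ‖b‖
  set Gn := ‖g‖
  have hm2 : ‖m‖ ^ 2 ≤ ((A + B) / 2) ^ 2 := by
    have := pow_le_pow_left₀ (norm_nonneg m) hmn 2
    exact this
  have quad : B ^ 2 - A ^ 2 ≤ Δt * max α 0 / 2 * (A + B) ^ 2 + Gn * (A + B) := by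
    have h3 : 2 * Δt * ⟪L m, m⟫ ≤ 2 * Δt * (max α 0 * ‖m‖ ^ 2) :=
      mul_le_mul_of_nonneg_left hLm (by positivity)
    have h4 : 2 * Δt * ((max α 0) * ‖m‖ ^ 2) ≤ 2 * Δt * ((max α 0) * ((A + B) / 2) ^ 2) := by
      have := mul_le_mul_of_nonneg_left hm2 hα
      exact mul_le_mul_of_nonneg_left this (by positivity)
    have h7 : 2 * Δt * ((max α 0) * ((A + B) / 2) ^ 2) = Δt * max α 0 / 2 * (A + B) ^ 2 := by ring
    linarith [key.le, h2.le, key.ge, h2.ge, h3, h4, hg]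
  set x := Δt * max α 0 with hxdef
  have hxnn : (0:ℝ) ≤ x := by positivity
  rcases eq_or_lt_of_le (by positivity : (0:ℝ) ≤ A + B) with hs | hs
  · have hA0 : A = 0 := by linarith
    have hB0 : B = 0 := by linarith
    rw [hB0]
    positivity
  · have h5 : (B - A) * (A + B) ≤ (x / 2 * (A + B) + Gn) * (A + B) := by nlinarith [quad]
    have h6 : B - A ≤ x / 2 * (A + B) + Gn := le_of_mul_le_mul_right h5 hs
    nlinarith [h6, mul_nonneg hxnn hA, mul_nonneg hxnn hG, mul_nonneg hxnn (mul_nonneg hxnn hA),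
      mul_nonneg hxnn hB, hx]

set_option maxHeartbeats 1000000 in
/-- Convergence of the implicit midpoint low-rank GMRES scheme. -/
theorem convergence_implicit_midpoint_lrGMRES (α c c₀ T : ℝ)
    (hc : 0 < c) (hc₀ : 0 < c₀) (hT : 0 < T) :
    ∃ Δt₀ > (0 : ℝ), ∃ C > (0 : ℝ),
      ∀ (m₁ m₂ : ℕ)
        (L : Matrix (Fin m₁) (Fin m₂) ℝ →ₗ[ℝ] Matrix (Fin m₁) (Fin m₂) ℝ),
        (∀ Z : Matrix (Fin m₁) (Fin m₂) ℝ, finner (L Z) Z ≤ α * (fnorm Z) ^ 2) →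
        ∀ Δt : ℝ, 0 < Δt → Δt ≤ Δt₀ →
        ∀ N : ℕ, (N : ℝ) * Δt ≤ T →
        ∀ X Xt Y G r : ℕ → Matrix (Fin m₁) (Fin m₂) ℝ,
          -- (i) exact-solution midpoint identity with local truncation error
          (∀ n < N, Y (n + 1) - Y n = Δt • L ((2 : ℝ)⁻¹ • (Y n + Y (n + 1))) + G n) →
          (∀ n < N, fnorm (G n) ≤ c * Δt ^ 2) →
          -- (ii) converged GMRES step
          (∀ n < N, Xt (n + 1) - X n = Δt • L ((2 : ℝ)⁻¹ • (X n + Xt (n + 1))) + r n) →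
          (∀ n < N, fnorm (r n) ≤ c * Δt ^ 2) →
          -- (iii) truncation step
          (∀ n < N, fnorm (X (n + 1) - Xt (n + 1)) ≤ c * Δt ^ 2) →
          -- (iv) initial error
          fnorm (X 0 - Y 0) ≤ c₀ * Δt →
          ∀ n ≤ N, fnorm (X n - Y n) ≤ C * Δt := by
  have hα : (0:ℝ) ≤ max α 0 := le_max_right _ _
  set K : ℝ := 2 * max α 0 + 1 with hK
  have hKpos : (0:ℝ) < K := by positivity
  clear_value K
  refine ⟨1 / (2 * K), by positivity, (c₀ + 5 * c * T) * Real.exp (K * T), by positivity, ?_⟩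
  intro m₁ m₂ L hL Δt hΔt hΔt0 N hNT X Xt Y G r hY hG hXt hr htr h0 n hn
  have hxb : Δt * max α 0 ≤ 1 / 2 := by
    have h2 : max α 0 ≤ K := by rw [hK]; linarith
    calc Δt * max α 0 ≤ (1 / (2 * K)) * K :=
          mul_le_mul hΔt0 h2 hα (by positivity)
      _ = 1 / 2 := by field_simp
  -- transfer L to Euclidean space
  set L' : EuclideanSpace ℝ (Fin m₁ × Fin m₂) →ₗ[ℝ] EuclideanSpace ℝ (Fin m₁ × Fin m₂) :=
    (eqE.toLinearMap ∘ₗ L) ∘ₗ eqE.symm.toLinearMap with hL'def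
  have hL'app : ∀ w : Matrix (Fin m₁) (Fin m₂) ℝ, L' (eqE w) = eqE (L w) := by
    intro w; simp [hL'def]
  have hL' : ∀ z : EuclideanSpace ℝ (Fin m₁ × Fin m₂), ⟪L' z, z⟫ ≤ α * ‖z‖ ^ 2 := by
    intro z
    obtain ⟨w, rfl⟩ := eqE.surjective z
    rw [hL'app, ← finner_eq, ← fnorm_eq]
    exact hL w
  -- one-step estimate
  have step : ∀ k < N, fnorm (X (k+1) - Y (k+1)) ≤
      (1 + K * Δt) * fnorm (X k - Y k) + 5 * c * Δt ^ 2 := by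
    intro k hkN
    set en : Matrix (Fin m₁) (Fin m₂) ℝ := X k - Y k with hen
    set et : Matrix (Fin m₁) (Fin m₂) ℝ := Xt (k+1) - Y (k+1) with het
    have hid : et - en = Δt • L ((2:ℝ)⁻¹ • (en + et)) + (r k - G k) := by
      have h1 := hXt k hkN
      have h2 := hY k hkN
      have h3 : (2:ℝ)⁻¹ • (en + et)
          = (2:ℝ)⁻¹ • (X k + Xt (k+1)) - (2:ℝ)⁻¹ • (Y k + Y (k+1)) := by
        rw [← smul_sub]
        congr 1
        rw [hen, het]
        abel
      have h4 : et - en = (Xt (k+1) - X k) - (Y (k+1) - Y k) := by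
        rw [hen, het]; abel
      rw [h4, h1, h2, h3, map_sub, smul_sub]
      abel
    have habE : eqE et - eqE en
        = Δt • L' ((2:ℝ)⁻¹ • (eqE en + eqE et)) + eqE (r k - G k) := by
      have h := congrArg (eqE (m₁ := m₁) (m₂ := m₂)) hid
      rw [map_sub, map_add, map_smul] at h
      rw [h, ← hL'app, map_smul, map_add]
    have hb := step_bound L' α hL' hΔt hxb (eqE en) (eqE et) (eqE (r k - G k)) habE
    rw [← fnorm_eq, ← fnorm_eq, ← fnorm_eq] at hb
    have hrg : fnorm (r k - G k) ≤ 2 * c * Δt ^ 2 := by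
      have := fnorm_sub_le (r k) (G k)
      have h5 := hr k hkN
      have h6 := hG k hkN
      linarith
    have htri : fnorm (X (k+1) - Y (k+1)) ≤ fnorm (X (k+1) - Xt (k+1)) + fnorm et := by
      have heq : X (k+1) - Y (k+1) = (X (k+1) - Xt (k+1)) + et := by
        rw [het]; abel
      rw [heq]
      exact fnorm_add_le _ _
    have h7 := htr k hkN
    have h8 : (1 + 3 / 2 * (max α 0) * Δt) * fnorm en ≤ (1 + K * Δt) * fnorm en := by
      apply mul_le_mul_of_nonneg_right _ (fnorm_nonneg' en)
      rw [hK]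
      nlinarith [hΔt.le, hα]
    nlinarith [hb, hrg, htri, h7, h8]
  -- discrete Grönwall invariant
  have inv : ∀ k, k ≤ N →
      fnorm (X k - Y k) ≤ (c₀ + 5 * c * (k * Δt)) * Δt * (1 + K * Δt) ^ k := by
    intro k
    induction k with
    | zero =>
        intro _
        simpa using h0
    | succ k ih =>
        intro hk
        have hkN : k < N := Nat.lt_of_succ_le hk
        have h1 := step k hkN
        have h2 := ih (Nat.le_of_succ_le hk)
        have hone : (1:ℝ) ≤ 1 + K * Δt := by nlinarith [hKpos.le, hΔt.le]
        have hQ : (1:ℝ) ≤ (1 + K * Δt) ^ (k+1) := one_le_pow₀ hone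
        have hcoef : (0:ℝ) ≤ c₀ + 5 * c * (k * Δt) := by positivity
        calc fnorm (X (k+1) - Y (k+1))
            ≤ (1 + K * Δt) * fnorm (X k - Y k) + 5 * c * Δt ^ 2 := h1
          _ ≤ (1 + K * Δt) * ((c₀ + 5 * c * (k * Δt)) * Δt * (1 + K * Δt) ^ k)
              + 5 * c * Δt ^ 2 := by
                have := mul_le_mul_of_nonneg_left h2 (by linarith : (0:ℝ) ≤ 1 + K * Δt)
                linarith
          _ ≤ (c₀ + 5 * c * ((k+1 : ℕ) * Δt)) * Δt * (1 + K * Δt) ^ (k+1) := by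
                have hre : (c₀ + 5 * c * ((k+1 : ℕ) * Δt)) * Δt * (1 + K * Δt) ^ (k+1)
                    = (1 + K * Δt) * ((c₀ + 5 * c * (k * Δt)) * Δt * (1 + K * Δt) ^ k)
                      + 5 * c * Δt * Δt * (1 + K * Δt) ^ (k+1) := by
                  push_cast
                  ring
                rw [hre]
                have h9 : 5 * c * Δt ^ 2 ≤ 5 * c * Δt * Δt * (1 + K * Δt) ^ (k+1) := by
                  have h10 := mul_le_mul_of_nonneg_left hQ
                    (show (0:ℝ) ≤ 5 * c * Δt * Δt by positivity)
                  calc 5 * c * Δt ^ 2 = 5 * c * Δt * Δt * 1 := by ring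
                    _ ≤ _ := h10
                linarith
  -- conclude
  have h2 := inv n hn
  have hnN : (n:ℝ) ≤ N := Nat.cast_le.mpr hn
  have hnT : (n:ℝ) * Δt ≤ T := le_trans (mul_le_mul_of_nonneg_right hnN hΔt.le) hNT
  have hone : (0:ℝ) ≤ 1 + K * Δt := by positivity
  have hexp : (1 + K * Δt) ^ n ≤ Real.exp (K * T) := by
    have h3 : 1 + K * Δt ≤ Real.exp (K * Δt) := by
      have := Real.add_one_le_exp (K * Δt)
      linarith
    calc (1 + K * Δt) ^ n ≤ (Real.exp (K * Δt)) ^ n := pow_le_pow_left₀ hone h3 n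
      _ = Real.exp (n * (K * Δt)) := by rw [← Real.exp_nat_mul]
      _ ≤ Real.exp (K * T) := by
          apply Real.exp_le_exp.mpr
          have : (n:ℝ) * (K * Δt) = K * ((n:ℝ) * Δt) := by ring
          rw [this]
          exact mul_le_mul_of_nonneg_left hnT hKpos.le
  have h4 : c₀ + 5 * c * ((n:ℝ) * Δt) ≤ c₀ + 5 * c * T := by
    have := mul_le_mul_of_nonneg_left hnT (show (0:ℝ) ≤ 5 * c by positivity)
    linarith
  calc fnorm (X n - Y n) ≤ (c₀ + 5 * c * ((n:ℝ) * Δt)) * Δt * (1 + K * Δt) ^ n := h2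
    _ ≤ (c₀ + 5 * c * T) * Δt * Real.exp (K * T) := by
        apply mul_le_mul
        · exact mul_le_mul_of_nonneg_right h4 hΔt.le
        · exact hexp
        · positivity
        · positivity
    _ = (c₀ + 5 * c * T) * Real.exp (K * T) * Δt := by ring
end
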